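/- The parity function on three variables is not normal: the function h : 2^{1,2,3} → ℝ with h(∅)=0, h({1})=h({2})=h({3})=1, and h(S)=2 for all S with |S| ≥ 2, cannot be written as a non-negative linear combination of step functions h_W for W ⊊ {1,2,3}. -/
import Mathlib


/-- The step function at `W`: `0` on subsets of `W`, `1` otherwise. -/
def stepFn {n : ℕ} (W X : Finset (Fin n)) : ℝ := if X ⊆ W then 0 else 1

/-- A normal polymatroid: a non-negative linear combination of step functions `h_W`, `W ⊊ [n]`. -/
def IsNormal {n : ℕ} (h : Finset (Fin n) → ℝ) : Prop :=
  ∃ c : Finset (Fin n) → ℝ, (∀ W, 0 ≤ c W) ∧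
    ∀ X, h X = ∑ W ∈ Finset.univ.filter (fun W => W ≠ Finset.univ), c W * stepFn W X

/-- The parity entropy function on three variables. -/
def hparity : Finset (Fin 3) → ℝ := fun S => if S = ∅ then 0 else if S.card = 1 then 1 else 2

lemma filt_eq : Finset.univ.filter (fun W => W ≠ (Finset.univ : Finset (Fin 3))) =
    {∅, {0}, {1}, {2}, {0,1}, {0,2}, {1,2}} := by decide

theorem parity_not_normal : ¬ IsNormal hparity := by
  rintro ⟨c, hc, hsum⟩
  have h0 := hsum ∅
  have h1 := hsum {0}
  have h2 := hsum {1}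
  have h3 := hsum {2}
  have h12 := hsum {0,1}
  have h13 := hsum {0,2}
  have h23 := hsum {1,2}
  have hU := hsum Finset.univ
  rw [filt_eq] at h0 h1 h2 h3 h12 h13 h23 hU
  norm_num (config := { decide := true }) [hparity, stepFn, Finset.sum_insert,
    Finset.mem_insert, Finset.mem_singleton, Finset.sum_singleton,
    Finset.subset_iff] at h0 h1 h2 h3 h12 h13 h23 hU
  have := hc ∅
  linarith
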